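/- For every integer k and every integer n ≥ 1, the poly-Cauchy polynomials of the first kind satisfy C_n^(k)(x) = −x·C_{n-1}^(k)(x+1) + (1/n) Σ_{l=0}^{n} C(n,l) B_l^{(l)}(1) { C_{n-l}^{(k-1)}(x+1) − C_{n-l}^{(k)}(x+1) }, where B_l^{(l)}(1) is the value at 1 of the l-th Bernoulli polynomial of order l. -/

import Mathlib

open PowerSeries Finset

/-- Composition `F(G(t))` of formal power series (intended for `G` with zero
constant term, in which case `coeff n (G ^ m) = 0` for `m > n` and the finite
sum below computes the usual composition). -/
noncomputable def psComp (F G : PowerSeries ℝ) : PowerSeries ℝ :=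
  PowerSeries.mk fun n => ∑ m ∈ Finset.range (n + 1),
    (PowerSeries.coeff m F) * (PowerSeries.coeff n (G ^ m))

/-- The formal power series of `log (1 + t)`. -/
noncomputable def logSeries : PowerSeries ℝ :=
  PowerSeries.mk fun n => if n = 0 then 0 else (-1) ^ (n + 1) / n

/-- The polylogarithm factorial function `Lif_k(t) = ∑_{m ≥ 0} t^m / (m! (m+1)^k)`. -/
noncomputable def Lif (k : ℤ) : PowerSeries ℝ :=
  PowerSeries.mk fun m => 1 / ((m.factorial : ℝ) * ((m : ℝ) + 1) ^ k)

/-- The poly-Cauchy polynomial of the first kind `C_n^{(k)}(x)`, defined by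
`Lif_k(log(1+t)) / (1+t)^x = ∑_{n ≥ 0} C_n^{(k)}(x) t^n / n!`, where
`(1+t)^{-x} = exp (-x · log (1+t))`. -/
noncomputable def polyCauchy (k : ℤ) (n : ℕ) (x : ℝ) : ℝ :=
  (n.factorial : ℝ) * PowerSeries.coeff n
    (psComp (Lif k) logSeries *
      psComp (PowerSeries.rescale (-x) (PowerSeries.exp ℝ)) logSeries)

/-- The (signed) Stirling numbers of the first kind `S₁(l, m)`, defined by
`(log (1+t))^m = m! ∑_{l ≥ m} S₁(l,m) t^l / l!`. -/
noncomputable def S1 (l m : ℕ) : ℝ :=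
  (l.factorial : ℝ) / (m.factorial : ℝ) * PowerSeries.coeff l (logSeries ^ m)

/-- The ordinary Bernoulli numbers, via `t/(e^t - 1) = ∑ B_n t^n/n!`;
here `(mk fun m => 1/(m+1)!)` is the series `(e^t - 1)/t`. -/
noncomputable def Bern (n : ℕ) : ℝ :=
  (n.factorial : ℝ) * PowerSeries.coeff n
    (PowerSeries.mk fun m => (1 : ℝ) / (m + 1).factorial)⁻¹

/-- The Bernoulli polynomial of order `r`, via `(t/(e^t-1))^r e^{xt} = ∑ B_n^{(r)}(x) t^n/n!`. -/
noncomputable def bernPoly (r : ℕ) (n : ℕ) (x : ℝ) : ℝ :=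
  (n.factorial : ℝ) * PowerSeries.coeff n
    (((PowerSeries.mk fun m => (1 : ℝ) / (m + 1).factorial)⁻¹) ^ r *
      PowerSeries.rescale x (PowerSeries.exp ℝ))

/-- The series `log(1+t)/t`, so that `t / log(1+t) = Dlog⁻¹`. -/
noncomputable def Dlog : PowerSeries ℝ :=
  PowerSeries.mk fun n => (-1) ^ n / ((n : ℝ) + 1)

/-- The Cauchy numbers of the first kind, via `t/log(1+t) = ∑ C_n t^n/n!`. -/
noncomputable def cauchyNum (n : ℕ) : ℝ :=
  (n.factorial : ℝ) * PowerSeries.coeff n Dlog⁻¹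

/-- The numbers `T_n^{(r,k)}`, via
`(t/log(1+t))^r · Lif_k(log(1+t)) = ∑ T_n^{(r,k)} t^n/n!`. -/
noncomputable def T (r : ℕ) (k : ℤ) (n : ℕ) : ℝ :=
  (n.factorial : ℝ) * PowerSeries.coeff n (Dlog⁻¹ ^ r * psComp (Lif k) logSeries)

/-- The rising factorial `x^{(m)} = x (x+1) ⋯ (x+m-1)`. -/
noncomputable def risingFactorial (x : ℝ) (m : ℕ) : ℝ :=
  ∏ i ∈ Finset.range m, (x + i)

/-- Carlitz's polynomials `β_n^{(r)}(x)`, via `(t/log(1+t))^r (1+t)^x = ∑ β_n^{(r)}(x) t^n/n!`,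
where `(1+t)^x = exp (x log (1+t))`. -/
noncomputable def carlitz (r : ℕ) (n : ℕ) (x : ℝ) : ℝ :=
  (n.factorial : ℝ) * PowerSeries.coeff n
    (Dlog⁻¹ ^ r * psComp (PowerSeries.rescale x (PowerSeries.exp ℝ)) logSeries)

section API
variable {G : PowerSeries ℝ}
lemma coeff_pow_zero_of_lt (hG : PowerSeries.constantCoeff G = 0) {n m : ℕ} (h : n < m) :
    PowerSeries.coeff n (G ^ m) = 0 := by
  have hx : (X : PowerSeries ℝ) ^ m ∣ G ^ m :=
    pow_dvd_pow_of_dvd (PowerSeries.X_dvd_iff.mpr hG) m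
  exact (PowerSeries.X_pow_dvd_iff.mp hx) n h
lemma sum_range_shrink (f : ℕ → ℝ) {n N : ℕ} (hN : n < N)
    (h : ∀ m, n < m → f m = 0) :
    ∑ m ∈ Finset.range N, f m = ∑ m ∈ Finset.range (n+1), f m := by
  refine (Finset.sum_subset (by intro x hx; simp at hx ⊢; omega) ?_).symm
  intro x hx hx2
  simp only [Finset.mem_range] at hx hx2
  exact h x (by omega)
lemma coeff_aeval_sum (hG : PowerSeries.constantCoeff G = 0) (p : Polynomial ℝ) (n : ℕ) :
    PowerSeries.coeff n (Polynomial.aeval G p) =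
      ∑ m ∈ Finset.range (n+1), p.coeff m * PowerSeries.coeff n (G ^ m) := by
  rw [Polynomial.aeval_eq_sum_range, map_sum]
  simp only [LinearMap.map_smul, smul_eq_mul]
  set M := max (p.natDegree + 1) (n + 1) with hM
  have h1 : ∑ m ∈ Finset.range (p.natDegree + 1), p.coeff m * PowerSeries.coeff n (G ^ m)
      = ∑ m ∈ Finset.range M, p.coeff m * PowerSeries.coeff n (G ^ m) := by
    refine Finset.sum_subset (by intro x hx; simp at hx ⊢; omega) ?_
    intro x hx hx2
    simp only [Finset.mem_range] at hx hx2
    rw [Polynomial.coeff_eq_zero_of_natDegree_lt (by omega), zero_mul]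
  rw [h1]
  exact sum_range_shrink _ (by omega) fun m hm => by
    rw [coeff_pow_zero_of_lt hG hm, mul_zero]
lemma coeff_psComp_eq (hG : PowerSeries.constantCoeff G = 0) (F : PowerSeries ℝ) {n N : ℕ}
    (hN : n < N) :
    PowerSeries.coeff n (psComp F G) =
      PowerSeries.coeff n (Polynomial.aeval G (PowerSeries.trunc N F)) := by
  rw [coeff_aeval_sum hG, psComp, PowerSeries.coeff_mk]
  refine Finset.sum_congr rfl fun m hm => ?_
  simp only [Finset.mem_range] at hm
  rw [PowerSeries.coeff_trunc, if_pos (by omega)]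
lemma psComp_mul (hG : PowerSeries.constantCoeff G = 0) (F H : PowerSeries ℝ) :
    psComp (F * H) G = psComp F G * psComp H G := by
  ext n
  rw [coeff_psComp_eq hG (F*H) (Nat.lt_succ_self n), PowerSeries.coeff_mul]
  have : ∀ p ∈ Finset.HasAntidiagonal.antidiagonal n,
      PowerSeries.coeff p.1 (psComp F G) * PowerSeries.coeff p.2 (psComp H G) =
      PowerSeries.coeff p.1 (Polynomial.aeval G (PowerSeries.trunc (n+1) F)) *
      PowerSeries.coeff p.2 (Polynomial.aeval G (PowerSeries.trunc (n+1) H)) := by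
    intro p hp
    rw [Finset.HasAntidiagonal.mem_antidiagonal] at hp
    rw [coeff_psComp_eq hG F (N := n+1) (by omega), coeff_psComp_eq hG H (N := n+1) (by omega)]
  rw [Finset.sum_congr rfl this, ← PowerSeries.coeff_mul, ← map_mul]
  rw [coeff_aeval_sum hG, coeff_aeval_sum hG]
  refine Finset.sum_congr rfl fun m hm => ?_
  simp only [Finset.mem_range] at hm
  congr 1
  rw [PowerSeries.coeff_trunc, if_pos (by omega), Polynomial.coeff_mul, PowerSeries.coeff_mul]
  refine Finset.sum_congr rfl fun p hp => ?_
  rw [Finset.HasAntidiagonal.mem_antidiagonal] at hp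
  rw [PowerSeries.coeff_trunc, PowerSeries.coeff_trunc, if_pos (by omega), if_pos (by omega)]
end API
section API2
variable {G : PowerSeries ℝ}
lemma psComp_sub (F H : PowerSeries ℝ) :
    psComp (F - H) G = psComp F G - psComp H G := by
  ext n
  simp [psComp, ← Finset.sum_sub_distrib, sub_mul]
lemma psComp_smul (a : ℝ) (F : PowerSeries ℝ) :
    psComp (a • F) G = a • psComp F G := by
  ext n
  simp [psComp, Finset.mul_sum, mul_assoc]
lemma psComp_one : psComp 1 G = 1 := by
  ext n
  simp only [psComp, PowerSeries.coeff_mk]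
  rcases n with _ | n
  · simp
  · rw [Finset.sum_eq_zero, PowerSeries.coeff_one, if_neg (by omega)]
    intro m hm
    rcases m with _ | m
    · simp
    · rw [PowerSeries.coeff_one, if_neg (by omega), zero_mul]
lemma psComp_X (hG : PowerSeries.constantCoeff G = 0) : psComp X G = G := by
  ext n
  simp only [psComp, PowerSeries.coeff_mk]
  rcases n with _ | n
  · simp [PowerSeries.coeff_zero_eq_constantCoeff, hG]
  · rw [Finset.sum_eq_single 1]
    · simp
    · intro m hm hm1
      rw [PowerSeries.coeff_X, if_neg (by omega), zero_mul]
    · intro h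
      simp at h
lemma derivative_psComp (hG : PowerSeries.constantCoeff G = 0) (F : PowerSeries ℝ) :
    d⁄dX ℝ (psComp F G) = psComp (d⁄dX ℝ F) G * d⁄dX ℝ G := by
  ext n
  rw [PowerSeries.coeff_derivative, PowerSeries.coeff_mul]
  -- RHS: ∑ p ∈ antidiagonal n, coeff p.1 (psComp F' G) * coeff p.2 G'
  have step1 : ∀ p ∈ Finset.HasAntidiagonal.antidiagonal n,
      PowerSeries.coeff p.1 (psComp (d⁄dX ℝ F) G) * PowerSeries.coeff p.2 (d⁄dX ℝ G) =
      ∑ i ∈ Finset.range (n+1), PowerSeries.coeff i (d⁄dX ℝ F) *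
        (PowerSeries.coeff p.1 (G ^ i) * PowerSeries.coeff p.2 (d⁄dX ℝ G)) := by
    intro p hp
    rw [Finset.HasAntidiagonal.mem_antidiagonal] at hp
    rw [psComp, PowerSeries.coeff_mk,
      sum_range_shrink _ (n := p.1) (N := n+1) (by omega)
        (fun m hm => by rw [coeff_pow_zero_of_lt hG hm, mul_zero]) |>.symm,
      Finset.sum_mul]
    exact Finset.sum_congr rfl fun i _ => by ring
  rw [Finset.sum_congr rfl step1, Finset.sum_comm]
  have step2 : ∀ i ∈ Finset.range (n+1),
      ∑ p ∈ Finset.HasAntidiagonal.antidiagonal n, PowerSeries.coeff i (d⁄dX ℝ F) *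
        (PowerSeries.coeff p.1 (G ^ i) * PowerSeries.coeff p.2 (d⁄dX ℝ G)) =
      PowerSeries.coeff i (d⁄dX ℝ F) * PowerSeries.coeff n (G ^ i * d⁄dX ℝ G) := by
    intro i _
    rw [PowerSeries.coeff_mul, Finset.mul_sum]
  rw [Finset.sum_congr rfl step2]
  -- now each term: coeff i F' * coeff n (G^i * G') and (i+1) G^i G' = d (G^(i+1))
  have step3 : ∀ i ∈ Finset.range (n+1),
      PowerSeries.coeff i (d⁄dX ℝ F) * PowerSeries.coeff n (G ^ i * d⁄dX ℝ G) =
      PowerSeries.coeff (i+1) F * ((n+1) * PowerSeries.coeff (n+1) (G ^ (i+1))) := by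
    intro i _
    have hd : d⁄dX ℝ (G ^ (i+1)) = (i+1 : ℕ) • (G ^ i * d⁄dX ℝ G) := by
      rw [Derivation.leibniz_pow]
      simp
    have key : ((n:ℝ)+1) * PowerSeries.coeff (n+1) (G ^ (i+1)) =
        ((i:ℝ)+1) * PowerSeries.coeff n (G ^ i * d⁄dX ℝ G) := by
      have h2 := PowerSeries.coeff_derivative (G ^ (i+1)) n
      rw [hd, map_nsmul, nsmul_eq_mul] at h2
      push_cast at h2
      linarith
    rw [PowerSeries.coeff_derivative, key]
    ring
  rw [Finset.sum_congr rfl step3]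
  -- LHS: coeff (n+1) (psComp F G) * (n+1) = ∑_{m ∈ range (n+2)} coeff m F * coeff (n+1) (G^m) * (n+1)
  rw [psComp, PowerSeries.coeff_mk, Finset.sum_mul]
  rw [Finset.sum_range_succ' (fun m => PowerSeries.coeff m F * PowerSeries.coeff (n+1) (G ^ m) * ((n:ℝ)+1))]
  simp only [pow_zero, PowerSeries.coeff_one]
  rw [if_neg (by omega)]
  simp only [mul_zero, zero_mul, add_zero]
  refine Finset.sum_congr rfl fun i _ => by ring
section Chunk2
lemma hL0 : PowerSeries.constantCoeff logSeries = 0 := by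
  rw [← PowerSeries.coeff_zero_eq_constantCoeff_apply, logSeries, PowerSeries.coeff_mk, if_pos rfl]
lemma coeff_dL (n : ℕ) : PowerSeries.coeff n (d⁄dX ℝ logSeries) = (-1) ^ n := by
  rw [PowerSeries.coeff_derivative, logSeries, PowerSeries.coeff_mk, if_neg (by omega)]
  have h : ((n:ℝ) + 1) ≠ 0 := by positivity
  push_cast
  field_simp
  ring
lemma one_add_X_mul_dL : (1 + X) * d⁄dX ℝ logSeries = 1 := by
  ext n
  rw [add_mul, one_mul, map_add]
  rcases n with _ | n
  · rw [PowerSeries.coeff_zero_X_mul, coeff_dL]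
    simp
  · rw [PowerSeries.coeff_succ_X_mul, coeff_dL, coeff_dL, PowerSeries.coeff_one,
      if_neg (by omega), pow_succ]
    ring
noncomputable def E (a : ℝ) : PowerSeries ℝ :=
  psComp (PowerSeries.rescale a (PowerSeries.exp ℝ)) logSeries
lemma coeff_exp_real (n : ℕ) : PowerSeries.coeff n (PowerSeries.exp ℝ) = 1 / n.factorial := by
  rw [PowerSeries.coeff_exp, eq_ratCast]
  push_cast
  ring
lemma derivative_rescale_exp (a : ℝ) :
    d⁄dX ℝ (PowerSeries.rescale a (PowerSeries.exp ℝ)) =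
      a • PowerSeries.rescale a (PowerSeries.exp ℝ) := by
  ext n
  rw [PowerSeries.coeff_derivative, map_smul, PowerSeries.coeff_rescale,
    PowerSeries.coeff_rescale, coeff_exp_real, coeff_exp_real, smul_eq_mul]
  have h : ((n:ℝ) + 1) ≠ 0 := by positivity
  rw [Nat.factorial_succ, pow_succ]
  push_cast
  field_simp
lemma dE (a : ℝ) : d⁄dX ℝ (E a) = a • (E a * d⁄dX ℝ logSeries) := by
  rw [E, derivative_psComp hL0, derivative_rescale_exp, psComp_smul, smul_mul_assoc]
lemma E_mul (a b : ℝ) : E a * E b = E (a + b) := by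
  rw [E, E, E, ← psComp_mul hL0, PowerSeries.exp_mul_exp_eq_exp_add]
lemma coeff_E_zero (a : ℝ) : PowerSeries.coeff 0 (E a) = 1 := by
  rw [E, psComp, PowerSeries.coeff_mk]
  simp [PowerSeries.coeff_rescale, coeff_exp_real]
lemma E_rec (a : ℝ) (n : ℕ) :
    ((n:ℝ) + 1) * PowerSeries.coeff (n+1) (E a) + n * PowerSeries.coeff n (E a) =
      a * PowerSeries.coeff n (E a) := by
  have h : (1 + X) * d⁄dX ℝ (E a) = a • E a := by
    rw [dE]
    calc (1 + X) * (a • (E a * d⁄dX ℝ logSeries))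
        = a • (E a * ((1 + X) * d⁄dX ℝ logSeries)) := by
          rw [mul_smul_comm]; ring_nf
      _ = a • E a := by rw [one_add_X_mul_dL, mul_one]
  have h2 := congrArg (PowerSeries.coeff n) h
  rw [add_mul, one_mul, map_add, map_smul, smul_eq_mul] at h2
  rw [PowerSeries.coeff_derivative] at h2
  rcases n with _ | m
  · rw [PowerSeries.coeff_zero_X_mul] at h2
    push_cast
    push_cast at h2
    linarith
  · rw [PowerSeries.coeff_succ_X_mul, PowerSeries.coeff_derivative] at h2
    push_cast
    push_cast at h2
    linarith
lemma E_formula (a : ℝ) (n : ℕ) :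
    (n.factorial : ℝ) * PowerSeries.coeff n (E a) = ∏ i ∈ Finset.range n, (a - i) := by
  induction n with
  | zero => simp [coeff_E_zero]
  | succ m ih =>
    rw [Finset.prod_range_succ, ← ih]
    have h := E_rec a m
    have hm : ((m:ℝ) + 1) ≠ 0 := by positivity
    rw [Nat.factorial_succ]
    push_cast
    have : PowerSeries.coeff (m+1) (E a) =
        (a - m) * PowerSeries.coeff m (E a) / (m + 1) := by
      field_simp
      linarith
    rw [this]
    field_simp
lemma E_neg_one : E (-1) = d⁄dX ℝ logSeries := by
  ext n
  have h := E_formula (-1) n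
  have hfac : ((n.factorial : ℝ)) ≠ 0 := by positivity
  have hprod : ∏ i ∈ Finset.range n, ((-1:ℝ) - i) = (-1)^n * n.factorial := by
    have : ∀ i ∈ Finset.range n, ((-1:ℝ) - i) = (-1) * ((i:ℝ) + 1) := by intros; ring
    rw [Finset.prod_congr rfl this, Finset.prod_mul_distrib, Finset.prod_const,
      Finset.card_range]
    congr 1
    norm_cast
    exact Finset.prod_range_add_one_eq_factorial n
  rw [hprod] at h
  rw [coeff_dL]
  have h2 : (n.factorial : ℝ) * PowerSeries.coeff n (E (-1)) =
      (n.factorial : ℝ) * (-1)^n := by rw [h]; ring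
  exact mul_left_cancel₀ hfac h2
lemma E_one : E 1 = 1 + X := by
  ext n
  have h := E_formula 1 n
  have hfac : ((n.factorial : ℝ)) ≠ 0 := by positivity
  have key : PowerSeries.coeff n (E 1) = if n ≤ 1 then 1 else 0 := by
    rcases n with _ | _ | m
    · rw [if_pos (by omega)]; exact coeff_E_zero 1
    · simp [Finset.prod_range_one] at h
      rw [if_pos (by omega)]; exact h
    · have : ∏ i ∈ Finset.range (m+2), ((1:ℝ) - i) = 0 := by
        apply Finset.prod_eq_zero (i := 1) (by simp)
        norm_num
      rw [this] at h
      have := mul_eq_zero.mp h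
      rw [if_neg (by omega)]
      tauto
  rw [key, map_add, PowerSeries.coeff_one, PowerSeries.coeff_X]
  rcases n with _ | _ | m <;> simp
lemma psComp_X_mul {G : PowerSeries ℝ} (hG : PowerSeries.constantCoeff G = 0)
    (H : PowerSeries ℝ) : psComp (X * H) G = G * psComp H G := by
  rw [psComp_mul hG, psComp_X hG]
noncomputable def Einv : PowerSeries ℝ :=
  PowerSeries.mk fun m => (1 : ℝ) / (m + 1).factorial
lemma exp_eq_one_add_X_mul_Einv : PowerSeries.exp ℝ = 1 + X * Einv := by
  ext n
  rw [coeff_exp_real, map_add, PowerSeries.coeff_one]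
  rcases n with _ | m
  · simp [PowerSeries.coeff_zero_X_mul]
  · rw [PowerSeries.coeff_succ_X_mul, Einv, PowerSeries.coeff_mk, if_neg (by omega)]
    simp
lemma psComp_exp : psComp (PowerSeries.exp ℝ) logSeries = 1 + X := by
  have : PowerSeries.exp ℝ = PowerSeries.rescale 1 (PowerSeries.exp ℝ) := by
    rw [PowerSeries.rescale_one]; rfl
  rw [this, ← E, E_one]
lemma L_mul_psComp_Einv : logSeries * psComp Einv logSeries = X := by
  have h1 : psComp (X * Einv) logSeries = logSeries * psComp Einv logSeries :=
    psComp_X_mul hL0 Einv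
  have h2 : (X : PowerSeries ℝ) * Einv = PowerSeries.exp ℝ - 1 := by
    rw [exp_eq_one_add_X_mul_Einv]; ring
  rw [← h1, h2, psComp_sub, psComp_exp, psComp_one]
  ring
lemma L_eq_X_mul_Dlog : logSeries = X * Dlog := by
  ext n
  rcases n with _ | m
  · rw [PowerSeries.coeff_zero_X_mul]
    simp [logSeries]
  · rw [PowerSeries.coeff_succ_X_mul, logSeries, Dlog, PowerSeries.coeff_mk,
      PowerSeries.coeff_mk, if_neg (by omega)]
    push_cast
    ring_nf
lemma hDlog0 : PowerSeries.constantCoeff Dlog = 1 := by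
  rw [← PowerSeries.coeff_zero_eq_constantCoeff_apply, Dlog, PowerSeries.coeff_mk]
  norm_num
lemma psComp_Einv_eq_Dlog_inv : psComp Einv logSeries = Dlog⁻¹ := by
  have h1 : (X : PowerSeries ℝ) * (Dlog * psComp Einv logSeries) = X * 1 := by
    rw [← mul_assoc, ← L_eq_X_mul_Dlog, L_mul_psComp_Einv, mul_one]
  have h2 : Dlog * psComp Einv logSeries = 1 := mul_left_cancel₀ PowerSeries.X_ne_zero h1
  exact (PowerSeries.eq_inv_iff_mul_eq_one (by rw [hDlog0]; norm_num)).mpr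
    (by rw [mul_comm] at h2; exact h2)
lemma X_mul_dLif (k : ℤ) : X * d⁄dX ℝ (Lif k) = Lif (k - 1) - Lif k := by
  ext n
  rw [map_sub]
  simp only [Lif, PowerSeries.coeff_mk]
  rcases n with _ | m
  · rw [PowerSeries.coeff_zero_X_mul]
    norm_num
  · rw [PowerSeries.coeff_succ_X_mul, PowerSeries.coeff_derivative]
    simp only [Lif, PowerSeries.coeff_mk]
    have hm2 : ((m:ℝ) + 1 + 1) ≠ 0 := by positivity
    have hfac : ((m+1).factorial : ℝ) ≠ 0 := by positivity
    have hz : ((m:ℝ) + 1 + 1) ^ (k - 1) = ((m:ℝ) + 1 + 1) ^ k / ((m:ℝ) + 1 + 1) := by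
      rw [zpow_sub_one₀ hm2 k]
      field_simp
    have hzk : ((m:ℝ) + 1 + 1) ^ k ≠ 0 := zpow_ne_zero _ hm2
    push_cast
    rw [hz]
    first
    | (field_simp; ring)
    | field_simp
lemma hEinv0 : PowerSeries.constantCoeff Einv = 1 := by
  rw [← PowerSeries.coeff_zero_eq_constantCoeff_apply, Einv, PowerSeries.coeff_mk]
  norm_num
lemma Einv_mul_inv : Einv * Einv⁻¹ = 1 :=
  PowerSeries.mul_inv_cancel _ (by rw [hEinv0]; norm_num)
lemma X_mul_dEinv : X * d⁄dX ℝ Einv = PowerSeries.exp ℝ - Einv := by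
  ext n
  rw [map_sub, coeff_exp_real]
  rcases n with _ | m
  · rw [PowerSeries.coeff_zero_X_mul, Einv, PowerSeries.coeff_mk]
    norm_num
  · rw [PowerSeries.coeff_succ_X_mul, PowerSeries.coeff_derivative, Einv,
      PowerSeries.coeff_mk]
    have h1 : ((m+1+1).factorial : ℝ) = ((m:ℝ)+2) * (m+1).factorial := by
      rw [Nat.factorial_succ]; push_cast; ring
    have h2 : ((m+1).factorial : ℝ) ≠ 0 := by positivity
    have h3 : ((m:ℝ)+2) ≠ 0 := by positivity
    rw [h1]
    push_cast
    field_simp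
    ring
lemma X_mul_db : X * d⁄dX ℝ (Einv⁻¹) = Einv⁻¹ - (Einv⁻¹)^2 - X * Einv⁻¹ := by
  rw [PowerSeries.derivative_inv']
  have h1 := X_mul_dEinv
  have h2 := Einv_mul_inv
  have h3 := exp_eq_one_add_X_mul_Einv
  linear_combination (-(Einv⁻¹)^2) * h1 + (-(Einv⁻¹)^2) * h3 + ((1 - X) * Einv⁻¹) * h2
lemma bernPoly_eq (r n : ℕ) (x : ℝ) :
    bernPoly r n x = (n.factorial : ℝ) * PowerSeries.coeff n
      (Einv⁻¹ ^ r * PowerSeries.rescale x (PowerSeries.exp ℝ)) := rfl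
lemma bern_series_step (s : ℕ) (x : ℝ) :
    X * d⁄dX ℝ (Einv⁻¹ ^ (s+1) * PowerSeries.rescale x (PowerSeries.exp ℝ)) =
      (((s:ℝ)+1) • (Einv⁻¹ ^ (s+1) * PowerSeries.rescale x (PowerSeries.exp ℝ))
        - ((s:ℝ)+1) • (Einv⁻¹ ^ (s+2) * PowerSeries.rescale x (PowerSeries.exp ℝ))
        - ((s:ℝ)+1) • (X * (Einv⁻¹ ^ (s+1) * PowerSeries.rescale x (PowerSeries.exp ℝ))))
        + x • (X * (Einv⁻¹ ^ (s+1) * PowerSeries.rescale x (PowerSeries.exp ℝ))) := by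
  have hmul : d⁄dX ℝ (Einv⁻¹ ^ (s+1) * PowerSeries.rescale x (PowerSeries.exp ℝ)) =
      Einv⁻¹ ^ (s+1) * d⁄dX ℝ (PowerSeries.rescale x (PowerSeries.exp ℝ)) +
        PowerSeries.rescale x (PowerSeries.exp ℝ) * d⁄dX ℝ (Einv⁻¹ ^ (s+1)) := by
    have := (PowerSeries.derivative (R := ℝ)).leibniz (Einv⁻¹ ^ (s+1))
      (PowerSeries.rescale x (PowerSeries.exp ℝ))
    simpa [smul_eq_mul] using this
  have hpow : d⁄dX ℝ (Einv⁻¹ ^ (s+1)) = ((s:ℝ)+1) • (Einv⁻¹ ^ s * d⁄dX ℝ (Einv⁻¹)) := by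
    rw [Derivation.leibniz_pow]
    simp only [Nat.add_sub_cancel, smul_eq_mul, nsmul_eq_mul, PowerSeries.smul_eq_C_mul,
      map_add, map_one, map_natCast]
    push_cast
    ring
  rw [hmul, hpow, derivative_rescale_exp]
  simp only [PowerSeries.smul_eq_C_mul]
  have hdb := X_mul_db
  have hb : Einv⁻¹ ^ s * Einv⁻¹ = Einv⁻¹ ^ (s+1) := by rw [pow_succ]
  have hb2 : Einv⁻¹ ^ s * (Einv⁻¹)^2 = Einv⁻¹ ^ (s+2) := by rw [← pow_add]
  linear_combination (PowerSeries.C ((s:ℝ)+1) * PowerSeries.rescale x (PowerSeries.exp ℝ)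
      * Einv⁻¹ ^ s) * hdb
    + (PowerSeries.C ((s:ℝ)+1) * PowerSeries.rescale x (PowerSeries.exp ℝ)) * hb
    - (PowerSeries.C ((s:ℝ)+1) * PowerSeries.rescale x (PowerSeries.exp ℝ)) * hb2
    - (PowerSeries.C ((s:ℝ)+1) * PowerSeries.rescale x (PowerSeries.exp ℝ) * X) * hb
lemma bern_diag_step (s : ℕ) (x : ℝ) :
    bernPoly (s+2) (s+1) x = (x - (s+1)) * bernPoly (s+1) s x := by
  have h := congrArg (PowerSeries.coeff (s+1)) (bern_series_step s x)
  set S1 := Einv⁻¹ ^ (s+1) * PowerSeries.rescale x (PowerSeries.exp ℝ) with hS1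
  set S2 := Einv⁻¹ ^ (s+2) * PowerSeries.rescale x (PowerSeries.exp ℝ) with hS2
  rw [PowerSeries.coeff_succ_X_mul, PowerSeries.coeff_derivative] at h
  simp only [map_add, map_sub, map_smul, smul_eq_mul, PowerSeries.coeff_succ_X_mul] at h
  -- h : coeff (s+1) S1 * (s+1) = (s+1)*coeff (s+1) S1 - (s+1)*coeff(s+1) S2 - (s+1)*coeff s S1 + x * coeff s S1
  have key : ((s:ℝ)+1) * PowerSeries.coeff (s+1) S2 =
      (x - ((s:ℝ)+1)) * PowerSeries.coeff s S1 := by linarith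
  rw [bernPoly_eq, bernPoly_eq]
  have hfac : ((s+1).factorial : ℝ) = ((s:ℝ)+1) * s.factorial := by
    rw [Nat.factorial_succ]; push_cast; ring
  rw [hfac]
  calc ((s:ℝ)+1) * s.factorial * PowerSeries.coeff (s+1) S2
      = (s.factorial : ℝ) * (((s:ℝ)+1) * PowerSeries.coeff (s+1) S2) := by ring
    _ = (s.factorial : ℝ) * ((x - ((s:ℝ)+1)) * PowerSeries.coeff s S1) := by rw [key]
    _ = _ := by ring
lemma constantCoeff_rescale_exp (x : ℝ) :
    PowerSeries.coeff 0 (PowerSeries.rescale x (PowerSeries.exp ℝ)) = 1 := by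
  rw [PowerSeries.coeff_rescale, coeff_exp_real]
  norm_num
lemma bern_base (x : ℝ) : bernPoly 1 0 x = 1 := by
  rw [bernPoly_eq]
  have : PowerSeries.coeff 0 (Einv⁻¹ ^ 1 * PowerSeries.rescale x (PowerSeries.exp ℝ)) =
      PowerSeries.constantCoeff (Einv⁻¹) * 1 := by
    rw [PowerSeries.coeff_zero_eq_constantCoeff_apply, map_mul, pow_one]
    congr 1
    rw [← PowerSeries.coeff_zero_eq_constantCoeff_apply]
    exact constantCoeff_rescale_exp x
  rw [this, PowerSeries.constantCoeff_inv, hEinv0]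
  norm_num
lemma bern_diag1 (n : ℕ) (x : ℝ) :
    bernPoly (n+1) n x = ∏ i ∈ Finset.range n, (x - (i+1)) := by
  induction n with
  | zero => simpa using bern_base x
  | succ m ih =>
    rw [show m+1+1 = m+2 from rfl, bern_diag_step m x, ih, Finset.prod_range_succ]
    push_cast
    ring
lemma bern_diff (n : ℕ) (x : ℝ) :
    bernPoly (n+1) (n+1) (x+1) - bernPoly (n+1) (n+1) x = ((n:ℝ)+1) * bernPoly n n x := by
  have hser : Einv⁻¹ ^ (n+1) * PowerSeries.rescale (x+1) (PowerSeries.exp ℝ)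
      - Einv⁻¹ ^ (n+1) * PowerSeries.rescale x (PowerSeries.exp ℝ)
      = X * (Einv⁻¹ ^ n * PowerSeries.rescale x (PowerSeries.exp ℝ)) := by
    have hR : PowerSeries.rescale (x+1) (PowerSeries.exp ℝ) =
        PowerSeries.rescale x (PowerSeries.exp ℝ) * PowerSeries.exp ℝ := by
      rw [← PowerSeries.exp_mul_exp_eq_exp_add x 1, PowerSeries.rescale_one]
      rfl
    rw [hR]
    nth_rewrite 2 [exp_eq_one_add_X_mul_Einv]
    have hb : Einv⁻¹ ^ n * (Einv * Einv⁻¹) = Einv⁻¹ ^ n := by rw [Einv_mul_inv, mul_one]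
    calc Einv⁻¹ ^ (n+1) * (PowerSeries.rescale x (PowerSeries.exp ℝ) * (1 + X * Einv))
        - Einv⁻¹ ^ (n+1) * PowerSeries.rescale x (PowerSeries.exp ℝ)
        = X * ((Einv⁻¹ ^ n * (Einv * Einv⁻¹)) * PowerSeries.rescale x (PowerSeries.exp ℝ)) := by
          rw [pow_succ]; ring
      _ = _ := by rw [hb]
  have h := congrArg (PowerSeries.coeff (n+1)) hser
  rw [map_sub, PowerSeries.coeff_succ_X_mul] at h
  rw [bernPoly_eq, bernPoly_eq, bernPoly_eq, ← mul_sub, h]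
  have hfac : ((n+1).factorial : ℝ) = ((n:ℝ)+1) * n.factorial := by
    rw [Nat.factorial_succ]; push_cast; ring
  rw [hfac]
  ring
lemma bern_expand (r n : ℕ) (y : ℝ) :
    bernPoly r n y = ∑ j ∈ Finset.range (n+1),
      ((n.factorial : ℝ) * PowerSeries.coeff (n-j) (Einv⁻¹ ^ r) / j.factorial) * y^j := by
  rw [bernPoly_eq, PowerSeries.coeff_mul, Finset.Nat.sum_antidiagonal_eq_sum_range_succ_mk]
  rw [show n + 1 = (n + 1 - 1) + 1 from rfl] at *
  rw [← Finset.sum_range_reflect]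
  rw [Finset.mul_sum]
  refine Finset.sum_congr rfl fun j hj => ?_
  rw [Finset.mem_range] at hj
  have h1 : n + 1 - 1 - j = n - j := by omega
  have h2 : n - (n - j) = j := by omega
  rw [h1, h2, PowerSeries.coeff_rescale, coeff_exp_real]
  have : (j.factorial : ℝ) ≠ 0 := by positivity
  field_simp
lemma E_expand (y : ℝ) (n : ℕ) :
    (n.factorial : ℝ) * PowerSeries.coeff n (E y) = ∑ m ∈ Finset.range (n+1),
      ((n.factorial : ℝ) / m.factorial * PowerSeries.coeff n (logSeries ^ m)) * y^m := by
  rw [E, psComp, PowerSeries.coeff_mk, Finset.mul_sum]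
  refine Finset.sum_congr rfl fun m hm => ?_
  rw [PowerSeries.coeff_rescale, coeff_exp_real]
  have : (m.factorial : ℝ) ≠ 0 := by positivity
  field_simp
lemma cauchy_expand (n : ℕ) :
    cauchyNum n = ∑ m ∈ Finset.range (n+1),
      ((n.factorial : ℝ) / m.factorial * PowerSeries.coeff n (logSeries ^ m)) * (1/(m+1)) := by
  rw [cauchyNum, ← psComp_Einv_eq_Dlog_inv, psComp, PowerSeries.coeff_mk, Finset.mul_sum]
  refine Finset.sum_congr rfl fun m hm => ?_
  rw [Einv, PowerSeries.coeff_mk]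
  have h1 : ((m+1).factorial : ℝ) = ((m:ℝ)+1) * m.factorial := by
    rw [Nat.factorial_succ]; push_cast; ring
  have h2 : (m.factorial : ℝ) ≠ 0 := by positivity
  have h3 : ((m:ℝ)+1) ≠ 0 := by positivity
  rw [h1]
  field_simp
  try ring
  try tauto
lemma bern_cauchy (n : ℕ) : bernPoly n n 1 = cauchyNum n := by
  have hd := bern_diff n 1
  rw [show (1:ℝ)+1 = 2 by norm_num] at hd
  -- expansions
  set b := Einv⁻¹ ^ (n+1) with hb
  have hc2 := bern_expand (n+1) (n+1) 2
  have hc1 := bern_expand (n+1) (n+1) 1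
  have hdiag := fun y => (bern_expand (n+1) n y).symm.trans (bern_diag1 n y)
  have hE := fun y => (E_expand y n).symm.trans (E_formula y n)
  -- abbreviations
  set c : ℕ → ℝ := fun j => ((n+1).factorial : ℝ) *
    PowerSeries.coeff (n+1-j) (Einv⁻¹ ^ (n+1)) / j.factorial with hcdef
  set d : ℕ → ℝ := fun i => (n.factorial : ℝ) *
    PowerSeries.coeff (n-i) (Einv⁻¹ ^ (n+1)) / i.factorial with hddef
  set a : ℕ → ℝ := fun m => (n.factorial : ℝ) / m.factorial *
    PowerSeries.coeff n (logSeries ^ m) with hadef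
  have hstep1 : ((n:ℝ)+1) * bernPoly n n 1 =
      ∑ j ∈ Finset.range (n+2), c j * (2^j - 1) := by
    rw [← hd, hc2, hc1]
    rw [← Finset.sum_sub_distrib]
    refine Finset.sum_congr rfl fun j hj => ?_
    simp only [one_pow]
    ring
  have hF4 : ∀ i, c (i+1) * (2^(i+1) - 1) =
      ((n:ℝ)+1) * (d i * ((2^(i+1) - 1^(i+1)) / ((i:ℝ)+1))) := by
    intro i
    simp only [hcdef, hddef]
    have e1 : n + 1 - (i+1) = n - i := by omega
    have e2 : ((i+1).factorial : ℝ) = ((i:ℝ)+1) * i.factorial := by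
      rw [Nat.factorial_succ]; push_cast; ring
    have e3 : ((n+1).factorial : ℝ) = ((n:ℝ)+1) * n.factorial := by
      rw [Nat.factorial_succ]; push_cast; ring
    have h2 : (i.factorial : ℝ) ≠ 0 := by positivity
    have h3 : ((i:ℝ)+1) ≠ 0 := by positivity
    rw [e1, e2, e3]
    field_simp
    ring
  have hstep2 : ∑ j ∈ Finset.range (n+2), c j * (2^j - 1) =
      ((n:ℝ)+1) * ∑ i ∈ Finset.range (n+1), d i * ((2^(i+1) - 1^(i+1)) / ((i:ℝ)+1)) := by
    rw [Finset.sum_range_succ' (fun j => c j * (2^j - 1))]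
    simp only [pow_zero, sub_self, mul_zero, add_zero]
    rw [Finset.mul_sum]
    exact Finset.sum_congr rfl fun i _ => hF4 i
  -- integral computations
  have hint1 : ∫ x in (1:ℝ)..2, (∑ i ∈ Finset.range (n+1), d i * x^i) =
      ∑ i ∈ Finset.range (n+1), d i * ((2^(i+1) - 1^(i+1)) / ((i:ℝ)+1)) := by
    rw [intervalIntegral.integral_finset_sum (f := fun i x => d i * x ^ i) (fun i _ =>
      ((continuous_const.mul (continuous_pow i)).intervalIntegrable 1 2))]
    refine Finset.sum_congr rfl fun i _ => ?_
    rw [intervalIntegral.integral_const_mul, integral_pow]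
  have hint2 : ∫ x in (0:ℝ)..1, (∑ m ∈ Finset.range (n+1), a m * x^m) =
      ∑ m ∈ Finset.range (n+1), a m * (1/((m:ℝ)+1)) := by
    rw [intervalIntegral.integral_finset_sum (f := fun i x => a i * x ^ i) (fun i _ =>
      ((continuous_const.mul (continuous_pow i)).intervalIntegrable 0 1))]
    refine Finset.sum_congr rfl fun m _ => ?_
    rw [intervalIntegral.integral_const_mul, integral_pow]
    norm_num
  have hshift : ∫ x in (1:ℝ)..2, (∑ i ∈ Finset.range (n+1), d i * x^i) =
      ∫ x in (0:ℝ)..1, (∑ m ∈ Finset.range (n+1), a m * x^m) := by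
    have hfun1 : (fun x : ℝ => ∑ i ∈ Finset.range (n+1), d i * x^i) =
        fun x : ℝ => ∏ i ∈ Finset.range n, (x - ((i:ℝ)+1)) := funext fun y => hdiag y
    have hfun2 : (fun x : ℝ => ∑ m ∈ Finset.range (n+1), a m * x^m) =
        fun x : ℝ => ∏ i ∈ Finset.range n, (x - (i:ℝ)) := funext fun y => hE y
    rw [hfun1, hfun2]
    have hcomp := intervalIntegral.integral_comp_add_right (a := (0:ℝ)) (b := 1)
      (fun y : ℝ => ∏ i ∈ Finset.range n, (y - ((i:ℝ)+1))) 1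
    norm_num at hcomp
    rw [← hcomp]
  have hfinal : ((n:ℝ)+1) * bernPoly n n 1 = ((n:ℝ)+1) * cauchyNum n := by
    rw [hstep1, hstep2, ← hint1, hshift, hint2, cauchy_expand n]
  have hne : ((n:ℝ)+1) ≠ 0 := by positivity
  exact mul_left_cancel₀ hne hfinal
lemma main_series (k : ℤ) (x : ℝ) :
    X * d⁄dX ℝ (psComp (Lif k) logSeries * E (-x)) =
      Dlog⁻¹ * ((psComp (Lif (k-1)) logSeries - psComp (Lif k) logSeries) * E (-(x+1)))
        - PowerSeries.C x * (X * (psComp (Lif k) logSeries * E (-(x+1)))) := by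
  have hDD : Dlog * Dlog⁻¹ = 1 :=
    PowerSeries.mul_inv_cancel _ (by rw [hDlog0]; norm_num)
  have hΔ : X * psComp (d⁄dX ℝ (Lif k)) logSeries =
      Dlog⁻¹ * (psComp (Lif (k-1)) logSeries - psComp (Lif k) logSeries) := by
    have e1 : logSeries * psComp (d⁄dX ℝ (Lif k)) logSeries =
        psComp (Lif (k-1)) logSeries - psComp (Lif k) logSeries := by
      rw [← psComp_X_mul hL0, X_mul_dLif, psComp_sub]
    calc X * psComp (d⁄dX ℝ (Lif k)) logSeries
        = (Dlog * Dlog⁻¹) * (X * psComp (d⁄dX ℝ (Lif k)) logSeries) := by rw [hDD, one_mul]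
      _ = Dlog⁻¹ * ((X * Dlog) * psComp (d⁄dX ℝ (Lif k)) logSeries) := by ring
      _ = _ := by rw [← L_eq_X_mul_Dlog, e1]
  have hmul : d⁄dX ℝ (psComp (Lif k) logSeries * E (-x)) =
      psComp (Lif k) logSeries * d⁄dX ℝ (E (-x)) +
        E (-x) * d⁄dX ℝ (psComp (Lif k) logSeries) := by
    have := (PowerSeries.derivative (R := ℝ)).leibniz (psComp (Lif k) logSeries) (E (-x))
    simpa [smul_eq_mul] using this
  have hdEx : d⁄dX ℝ (E (-x)) = PowerSeries.C (-x) * (E (-x) * d⁄dX ℝ logSeries) := by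
    rw [dE, PowerSeries.smul_eq_C_mul]
  have hE2 : E (-x) * E (-1) = E (-(x+1)) := by
    rw [E_mul, show (-x + -1 : ℝ) = -(x+1) by ring]
  rw [hmul, hdEx, derivative_psComp hL0, ← E_neg_one, ← hE2, map_neg]
  linear_combination (E (-x) * E (-1)) * hΔ
lemma sum_eq (k : ℤ) (x : ℝ) (n : ℕ) :
    ∑ l ∈ Finset.range (n + 1),
        (n.choose l : ℝ) * bernPoly l l 1 *
          (polyCauchy (k - 1) (n - l) (x + 1) - polyCauchy k (n - l) (x + 1)) =
      (n.factorial : ℝ) * PowerSeries.coeff n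
        (Dlog⁻¹ * ((psComp (Lif (k-1)) logSeries - psComp (Lif k) logSeries) * E (-(x+1)))) := by
  rw [PowerSeries.coeff_mul, Finset.Nat.sum_antidiagonal_eq_sum_range_succ_mk, Finset.mul_sum]
  refine Finset.sum_congr rfl fun l hl => ?_
  rw [Finset.mem_range] at hl
  have hl' : l ≤ n := by omega
  have hb : bernPoly l l 1 = (l.factorial : ℝ) * PowerSeries.coeff l Dlog⁻¹ := by
    rw [bern_cauchy, cauchyNum]
  have hpc : polyCauchy (k - 1) (n - l) (x + 1) - polyCauchy k (n - l) (x + 1) =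
      ((n-l).factorial : ℝ) * PowerSeries.coeff (n-l)
        ((psComp (Lif (k-1)) logSeries - psComp (Lif k) logSeries) * E (-(x+1))) := by
    rw [polyCauchy, polyCauchy, sub_mul, map_sub]
    have : psComp (PowerSeries.rescale (-(x+1)) (PowerSeries.exp ℝ)) logSeries = E (-(x+1)) := rfl
    rw [this]
    ring
  rw [hb, hpc]
  have hfac : (n.choose l : ℝ) * l.factorial * (n-l).factorial = n.factorial := by
    rw [← Nat.cast_mul, ← Nat.cast_mul, Nat.choose_mul_factorial_mul_factorial hl']
  calc (n.choose l : ℝ) * ((l.factorial : ℝ) * PowerSeries.coeff l Dlog⁻¹) *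
        (((n-l).factorial : ℝ) * PowerSeries.coeff (n-l)
          ((psComp (Lif (k-1)) logSeries - psComp (Lif k) logSeries) * E (-(x+1))))
      = ((n.choose l : ℝ) * l.factorial * (n-l).factorial) *
        (PowerSeries.coeff l Dlog⁻¹ * PowerSeries.coeff (n-l)
          ((psComp (Lif (k-1)) logSeries - psComp (Lif k) logSeries) * E (-(x+1)))) := by ring
    _ = _ := by rw [hfac]

/-- Theorem 4 of the paper. -/
theorem polyCauchy_recurrence_bernoulli (k : ℤ) (n : ℕ) (hn : 1 ≤ n) (x : ℝ) :
    polyCauchy k n x =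
      -x * polyCauchy k (n - 1) (x + 1) +
      (1 / (n : ℝ)) * ∑ l ∈ Finset.range (n + 1),
        (n.choose l : ℝ) * bernPoly l l 1 *
          (polyCauchy (k - 1) (n - l) (x + 1) - polyCauchy k (n - l) (x + 1)) := by
  obtain ⟨m, rfl⟩ : ∃ m, n = m + 1 := ⟨n - 1, by omega⟩
  rw [sum_eq]
  have hcoeff := congrArg (PowerSeries.coeff (m+1)) (main_series k x)
  rw [map_sub, PowerSeries.coeff_succ_X_mul, PowerSeries.coeff_derivative,
    PowerSeries.coeff_C_mul, PowerSeries.coeff_succ_X_mul] at hcoeff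
  -- hcoeff : coeff (m+1) F * (m+1) = S' - x * coeff m (Φ * E(-(x+1)))
  have hEdef : ∀ y : ℝ, psComp (PowerSeries.rescale (-y) (PowerSeries.exp ℝ)) logSeries
      = E (-y) := fun _ => rfl
  rw [polyCauchy, polyCauchy, hEdef, hEdef]
  have h1 : psComp (PowerSeries.rescale (-(x+1)) (PowerSeries.exp ℝ)) logSeries
      = E (-(x+1)) := rfl
  simp only [Nat.add_sub_cancel]
  set A := PowerSeries.coeff (m+1) (psComp (Lif k) logSeries * E (-x)) with hA
  set B := PowerSeries.coeff m (psComp (Lif k) logSeries * E (-(x+1))) with hB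
  set S := PowerSeries.coeff (m+1)
      (Dlog⁻¹ * ((psComp (Lif (k-1)) logSeries - psComp (Lif k) logSeries) * E (-(x+1)))) with hS
  have hm1 : ((m:ℝ) + 1) ≠ 0 := by positivity
  have hfacm : ((m+1).factorial : ℝ) = ((m:ℝ)+1) * m.factorial := by
    rw [Nat.factorial_succ]; push_cast; ring
  -- hcoeff : A * (m+1) = S - x * B
  rw [hfacm]
  push_cast at hcoeff ⊢
  field_simp
  nlinarith [hcoeff, sq_nonneg ((m:ℝ))]
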